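/- Let V be an (A,G)-module and let G₀ be a normal subgroup of G of finite index. Then Len_{A,G}(V) ≤ Len_{A,G₀}(V) ≤ [G:G₀] · Len_{A,G}(V). (Lemma 2.3 of the paper, where G is an affine algebraic group acting rationally on A and G₀ is its identity component, which is a normal subgroup of finite index.) -/

import Mathlib

/-- A submodule `W` of an `A`-module `V` is stable under a `k`-linear action
`σ` of a group `G` on `V`. -/
def IsStableSubmodule (A : Type*) {k G V : Type*} [Field k] [Group G] [AddCommGroup V]
    [Module k V] [Ring A] [Module A V]
    (σ : G →* (V ≃ₗ[k] V)) (W : Submodule A V) : Prop :=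
  ∀ g : G, ∀ v ∈ W, σ g v ∈ W

/-- The length `Len_{A,G}(V)` of an `(A,G)`-module `V`: the supremum of all `n`
for which there exists a strictly increasing chain `W₀ ⊊ W₁ ⊊ ⋯ ⊊ Wₙ` of
`G`-stable `A`-submodules of `V`. -/
noncomputable def lenAG (A : Type*) {k G V : Type*} [Field k] [Group G] [AddCommGroup V]
    [Module k V] [Ring A] [Module A V] (σ : G →* (V ≃ₗ[k] V)) : ℕ∞ :=
  ⨆ (n : ℕ) (_ : ∃ W : Fin (n + 1) → Submodule A V,
      StrictMono W ∧ ∀ i, IsStableSubmodule A σ (W i)), (n : ℕ∞)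

set_option linter.unusedSectionVars false
set_option maxHeartbeats 1000000

namespace LenAG23

open Submodule

variable {k A G V : Type*} [Field k] [Ring A] [Algebra k A] [Group G]
  [AddCommGroup V] [Module k V] [Module A V] [IsScalarTower k A V]

section Sigma

variable (σ : G →* (V ≃ₗ[k] V))

theorem sig_apply_apply (g h : G) (v : V) : σ g (σ h v) = σ (g * h) v := by
  rw [map_mul]; rfl

theorem sig_cancel (g : G) (v : V) : σ g (σ g⁻¹ v) = v := by
  rw [sig_apply_apply, mul_inv_cancel, map_one]; rfl

theorem sig_cancel' (g : G) (v : V) : σ g⁻¹ (σ g v) = v := by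
  rw [sig_apply_apply, inv_mul_cancel, map_one]; rfl

/-- `G₀`-stability, phrased with coerced elements. -/
def St0 (G₀ : Subgroup G) (W : Submodule A V) : Prop :=
  ∀ g : G₀, ∀ v ∈ W, σ (g : G) v ∈ W

theorem st0_iff (G₀ : Subgroup G) (W : Submodule A V) :
    IsStableSubmodule A (σ.comp G₀.subtype) W ↔ St0 σ G₀ W := Iff.rfl

theorem stG_st0 (G₀ : Subgroup G) {W : Submodule A V} (h : IsStableSubmodule A σ W) :
    St0 σ G₀ W := fun g v hv => h g v hv

theorem st0_bot (G₀ : Subgroup G) : St0 σ G₀ (⊥ : Submodule A V) := by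
  intro g v hv
  rw [Submodule.mem_bot] at hv ⊢
  rw [hv, map_zero]

theorem st0_top (G₀ : Subgroup G) : St0 σ G₀ (⊤ : Submodule A V) := fun _ _ _ => trivial

theorem stG_bot : IsStableSubmodule A σ (⊥ : Submodule A V) := by
  intro g v hv
  rw [Submodule.mem_bot] at hv ⊢
  rw [hv, map_zero]

theorem stG_top : IsStableSubmodule A σ (⊤ : Submodule A V) := fun _ _ _ => trivial

theorem St0.sup {G₀ : Subgroup G} {W W' : Submodule A V} (h : St0 σ G₀ W) (h' : St0 σ G₀ W') :
    St0 σ G₀ (W ⊔ W') := by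
  intro g v hv
  rcases Submodule.mem_sup.1 hv with ⟨y, hy, z, hz, rfl⟩
  rw [map_add]
  exact Submodule.add_mem_sup (h g y hy) (h' g z hz)

theorem St0.inf {G₀ : Subgroup G} {W W' : Submodule A V} (h : St0 σ G₀ W) (h' : St0 σ G₀ W') :
    St0 σ G₀ (W ⊓ W') := fun g v hv => ⟨h g v hv.1, h' g v hv.2⟩

theorem StG.inf {W W' : Submodule A V} (h : IsStableSubmodule A σ W)
    (h' : IsStableSubmodule A σ W') : IsStableSubmodule A σ (W ⊓ W') :=
  fun g v hv => ⟨h g v hv.1, h' g v hv.2⟩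

theorem st0_iInf {G₀ : Subgroup G} {ι : Sort*} {f : ι → Submodule A V}
    (h : ∀ i, St0 σ G₀ (f i)) : St0 σ G₀ (⨅ i, f i) := by
  intro g v hv
  rw [Submodule.mem_iInf] at hv ⊢
  exact fun i => h i g v (hv i)

end Sigma

section GSub

variable (ρ : G →* (A ≃ₐ[k] A)) (σ : G →* (V ≃ₗ[k] V))
  (hc : ∀ (g : G) (a : A) (v : V), σ g (a • v) = (ρ g a) • (σ g v))

/-- The image of `W` under `σ g`, described as a preimage so that it is
manifestly an `A`-submodule. -/
def gSub (g : G) (W : Submodule A V) : Submodule A V where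
  carrier := {v | σ g⁻¹ v ∈ W}
  add_mem' := fun {a b} ha hb => by
    show σ g⁻¹ (a + b) ∈ W
    rw [map_add]; exact W.add_mem ha hb
  zero_mem' := by show σ g⁻¹ 0 ∈ W; rw [map_zero]; exact W.zero_mem
  smul_mem' := fun a v hv => by
    show σ g⁻¹ (a • v) ∈ W
    rw [hc]; exact W.smul_mem _ hv

theorem mem_gSub {g : G} {W : Submodule A V} {v : V} :
    v ∈ gSub ρ σ hc g W ↔ σ g⁻¹ v ∈ W := Iff.rfl

theorem gSub_mono {g : G} {W W' : Submodule A V} (h : W ≤ W') :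
    gSub ρ σ hc g W ≤ gSub ρ σ hc g W' := fun _ hv => h hv

theorem gSub_gSub (g h : G) (W : Submodule A V) :
    gSub ρ σ hc g (gSub ρ σ hc h W) = gSub ρ σ hc (g * h) W := by
  ext v
  rw [mem_gSub, mem_gSub, mem_gSub, sig_apply_apply, mul_inv_rev]

theorem gSub_one (W : Submodule A V) : gSub ρ σ hc 1 W = W := by
  ext v
  rw [mem_gSub, inv_one, map_one]
  rfl

theorem mem_gSub_of_mem {g : G} {W : Submodule A V} {x : V} (hx : x ∈ W) :
    σ g x ∈ gSub ρ σ hc g W := by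
  rw [mem_gSub, sig_cancel']; exact hx

theorem st0_gSub {G₀ : Subgroup G} [hN : G₀.Normal] {W : Submodule A V}
    (hW : St0 σ G₀ W) (g : G) : St0 σ G₀ (gSub ρ σ hc g W) := by
  rintro ⟨h, hh⟩ v hv
  rw [mem_gSub] at hv ⊢
  have key : σ g⁻¹ (σ h v) = σ (g⁻¹ * h * g) (σ g⁻¹ v) := by
    rw [sig_apply_apply, sig_apply_apply]
    congr 1
    group
  rw [key]
  exact hW ⟨g⁻¹ * h * g, hN.conj_mem' h hh g⟩ _ hv

theorem st0_gSub_eq {G₀ : Subgroup G} {W : Submodule A V} (hW : St0 σ G₀ W)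
    {h : G} (hh : h ∈ G₀) : gSub ρ σ hc h W = W := by
  apply le_antisymm
  · intro v hv
    rw [mem_gSub] at hv
    have := hW ⟨h, hh⟩ _ hv
    rwa [sig_cancel] at this
  · intro v hv
    rw [mem_gSub]
    exact hW ⟨h⁻¹, inv_mem hh⟩ _ hv

theorem stG_gSub_eq {W : Submodule A V} (hW : IsStableSubmodule A σ W) (g : G) :
    gSub ρ σ hc g W = W := by
  apply le_antisymm
  · intro v hv
    rw [mem_gSub] at hv
    have := hW g _ hv
    rwa [sig_cancel] at this
  · intro v hv
    rw [mem_gSub]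
    exact hW g⁻¹ _ hv

theorem stG_iff_le {W : Submodule A V} :
    IsStableSubmodule A σ W ↔ ∀ g : G, W ≤ gSub ρ σ hc g W := by
  constructor
  · intro hW g v hv
    rw [mem_gSub]
    exact hW g⁻¹ v hv
  · intro h g v hv
    have := h g⁻¹ hv
    rw [mem_gSub, inv_inv] at this
    exact this

theorem gSub_rep {G₀ : Subgroup G} {W : Submodule A V} (hW : St0 σ G₀ W) (g : G) :
    gSub ρ σ hc g W = gSub ρ σ hc ((g : G ⧸ G₀)).out W := by
  have h0 : ((g : G ⧸ G₀)).out⁻¹ * g ∈ G₀ :=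
    QuotientGroup.eq.mp (QuotientGroup.out_eq' (g : G ⧸ G₀))
  calc gSub ρ σ hc g W
      = gSub ρ σ hc (((g : G ⧸ G₀)).out * (((g : G ⧸ G₀)).out⁻¹ * g)) W := by
        rw [mul_inv_cancel_left]
    _ = gSub ρ σ hc ((g : G ⧸ G₀)).out (gSub ρ σ hc (((g : G ⧸ G₀)).out⁻¹ * g) W) :=
        (gSub_gSub ρ σ hc _ _ W).symm
    _ = gSub ρ σ hc ((g : G ⧸ G₀)).out W := by rw [st0_gSub_eq ρ σ hc hW h0]

/-- Largest `G`-stable submodule inside a `G₀`-stable `W` (intersection of all conjugates). -/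
def coreG (W : Submodule A V) : Submodule A V := ⨅ g : G, gSub ρ σ hc g W

theorem stG_coreG (W : Submodule A V) : IsStableSubmodule A σ (coreG ρ σ hc W) := by
  intro h v hv
  rw [coreG, Submodule.mem_iInf] at hv ⊢
  intro g
  rw [mem_gSub, sig_apply_apply]
  have := hv (h⁻¹ * g)
  rw [mem_gSub, mul_inv_rev, inv_inv] at this
  exact this

theorem coreG_le (W : Submodule A V) : coreG ρ σ hc W ≤ W := by
  have := iInf_le (fun g => gSub ρ σ hc g W) (1 : G)
  rwa [gSub_one] at this

theorem le_coreG {U W : Submodule A V} (hU : IsStableSubmodule A σ U) (h : U ≤ W) :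
    U ≤ coreG ρ σ hc W := by
  refine le_iInf fun g => ?_
  rw [← stG_gSub_eq ρ σ hc hU g]
  exact gSub_mono ρ σ hc h

/-- `G`-closure. -/
def clG (Y : Submodule A V) : Submodule A V := ⨆ g : G, gSub ρ σ hc g Y

theorem stG_sup_clG {U : Submodule A V} (hU : IsStableSubmodule A σ U) (Y : Submodule A V) :
    IsStableSubmodule A σ (U ⊔ clG ρ σ hc Y) := by
  rw [stG_iff_le ρ σ hc]
  intro g
  refine sup_le (le_trans ((stG_iff_le ρ σ hc).mp hU g) (gSub_mono ρ σ hc le_sup_left)) ?_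
  refine iSup_le fun g' => ?_
  have key : gSub ρ σ hc g' Y = gSub ρ σ hc g (gSub ρ σ hc (g⁻¹ * g') Y) := by
    rw [gSub_gSub, mul_inv_cancel_left]
  rw [key]
  exact gSub_mono ρ σ hc (le_trans (le_iSup (fun g'' => gSub ρ σ hc g'' Y) (g⁻¹ * g')) le_sup_right)

theorem gSub_span (g : G) (x : V) :
    gSub ρ σ hc g (Submodule.span A {x}) = Submodule.span A {σ g x} := by
  ext v
  rw [mem_gSub]
  rw [Submodule.mem_span_singleton, Submodule.mem_span_singleton]
  constructor
  · rintro ⟨a, ha⟩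
    refine ⟨ρ g a, ?_⟩
    rw [← hc, ha, sig_cancel]
  · rintro ⟨a, ha⟩
    refine ⟨ρ g⁻¹ a, ?_⟩
    rw [← ha, hc, sig_cancel']

end GSub

section Chains

variable {G' : Type*} [Group G'] (σ' : G' →* (V ≃ₗ[k] V))

variable (A) in
/-- `ℕ`-indexed reformulation of the existence of a strict chain of length `n`. -/
def NChain (n : ℕ) : Prop :=
  ∃ f : ℕ → Submodule A V, (∀ i, IsStableSubmodule A σ' (f i)) ∧
    (∀ i, f i ≤ f (i + 1)) ∧ ∀ i < n, f i < f (i + 1)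

theorem nchain_iff (n : ℕ) :
    (∃ W : Fin (n + 1) → Submodule A V,
      StrictMono W ∧ ∀ i, IsStableSubmodule A σ' (W i)) ↔ NChain A σ' n := by
  constructor
  · rintro ⟨W, hW, hst⟩
    refine ⟨fun i => W ⟨min i n, by omega⟩, fun i => hst _, fun i => ?_, fun i hi => ?_⟩
    · exact hW.monotone (by simp only [Fin.mk_le_mk]; omega)
    · apply hW
      rw [Fin.mk_lt_mk]
      omega
  · rintro ⟨f, hst, hmono, hstrict⟩
    have hfm : Monotone f := monotone_nat_of_le_succ hmono
    refine ⟨fun j => f j, ?_, fun j => hst _⟩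
    intro a b hab
    have hab' : (a : ℕ) < (b : ℕ) := hab
    calc f a < f (a + 1) := hstrict a (by omega)
      _ ≤ f b := hfm (by omega)

theorem le_lenAG {n : ℕ} (h : NChain A σ' n) : (n : ℕ∞) ≤ lenAG A σ' := by
  have hex := (nchain_iff σ' n).mpr h
  exact le_iSup₂ (f := fun (n : ℕ) (_ : ∃ W : Fin (n + 1) → Submodule A V,
    StrictMono W ∧ ∀ i, IsStableSubmodule A σ' (W i)) => (n : ℕ∞)) n hex

theorem lenAG_le {b : ℕ∞} (h : ∀ n, NChain A σ' n → (n : ℕ∞) ≤ b) : lenAG A σ' ≤ b :=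
  iSup_le fun n => iSup_le fun hex => h n ((nchain_iff σ' n).mp hex)

theorem nchain_zero : NChain A σ' 0 :=
  ⟨fun _ => ⊥, fun _ => stG_bot σ', fun _ => le_rfl, fun i hi => by omega⟩

end Chains

section Interval

variable (ρ : G →* (A ≃ₐ[k] A)) (σ : G →* (V ≃ₗ[k] V))
  (hc : ∀ (g : G) (a : A) (v : V), σ g (a • v) = (ρ g a) • (σ g v))

include ρ hc in
theorem interval_filtration (G₀ : Subgroup G) [hNor : G₀.Normal] (hfin : G₀.index ≠ 0)
    (U T : Submodule A V) (hU : IsStableSubmodule A σ U) (hT : IsStableSubmodule A σ T)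
    (hUT : U < T)
    (hsimp : ∀ Y, IsStableSubmodule A σ Y → U ≤ Y → Y ≤ T → Y = U ∨ Y = T) :
    ∃ M : ℕ → Submodule A V, M 0 = U ∧ (∀ r, G₀.index ≤ r → M r = T) ∧
      (∀ r, M r ≤ M (r + 1)) ∧ (∀ r, St0 σ G₀ (M r)) ∧
      ∀ r Y, St0 σ G₀ Y → M r ≤ Y → Y ≤ M (r + 1) → Y = M r ∨ Y = M (r + 1) := by
  classical
  haveI : G₀.FiniteIndex := ⟨hfin⟩
  haveI : Finite (G ⧸ G₀) := G₀.finite_quotient_of_finiteIndex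
  haveI : Fintype (G ⧸ G₀) := Fintype.ofFinite _
  obtain ⟨x, hxT, hxU⟩ := SetLike.exists_of_lt hUT
  -- generation: a G₀-stable submodule over U containing all conjugates of x contains T
  have genTop : ∀ N : Submodule A V, St0 σ G₀ N → U ≤ N →
      (∀ q : G ⧸ G₀, σ q.out x ∈ N) → T ≤ N := by
    intro N hN0 hUN hq
    have hZst : IsStableSubmodule A σ (U ⊔ clG ρ σ hc (Submodule.span A {x})) :=
      stG_sup_clG ρ σ hc hU _
    have hZT : U ⊔ clG ρ σ hc (Submodule.span A {x}) ≤ T := by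
      refine sup_le hUT.le (iSup_le fun g => ?_)
      rw [gSub_span]
      exact Submodule.span_le.mpr (by
        simp only [Set.singleton_subset_iff, SetLike.mem_coe]
        exact hT g x hxT)
    have hxZ : x ∈ U ⊔ clG ρ σ hc (Submodule.span A {x}) := by
      have h1 : x ∈ gSub ρ σ hc 1 (Submodule.span A {x}) := by
        rw [gSub_one]
        exact Submodule.subset_span rfl
      exact Submodule.mem_sup_right (le_iSup (fun g => gSub ρ σ hc g (Submodule.span A {x})) 1 h1)
    rcases hsimp _ hZst le_sup_left hZT with hEq | hEq
    · rw [hEq] at hxZ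
      exact absurd hxZ hxU
    · rw [← hEq]
      refine sup_le hUN (iSup_le fun g => ?_)
      rw [gSub_span]
      refine Submodule.span_le.mpr ?_
      simp only [Set.singleton_subset_iff, SetLike.mem_coe]
      have h1 : ((g : G ⧸ G₀)).out⁻¹ * g ∈ G₀ :=
        QuotientGroup.eq.mp (QuotientGroup.out_eq' (g : G ⧸ G₀))
      have h2 : g * ((g : G ⧸ G₀)).out⁻¹ ∈ G₀ := by
        have h3 := hNor.conj_mem _ h1 ((g : G ⧸ G₀)).out
        have h4 : ((g : G ⧸ G₀)).out * (((g : G ⧸ G₀)).out⁻¹ * g) * ((g : G ⧸ G₀)).out⁻¹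
            = g * ((g : G ⧸ G₀)).out⁻¹ := by group
        rwa [h4] at h3
      have h5 : σ g x = σ (g * ((g : G ⧸ G₀)).out⁻¹) (σ ((g : G ⧸ G₀)).out x) := by
        rw [sig_apply_apply]
        congr 1
        group
      rw [h5]
      exact hN0 ⟨_, h2⟩ _ (hq _)
  -- Zorn's lemma for a maximal proper G₀-stable submodule of T over U
  set P : Set (Submodule A V) :=
    {N | St0 σ G₀ N ∧ U ≤ N ∧ N ≤ T ∧ N ≠ T} with hP
  have hUP : U ∈ P := ⟨stG_st0 σ G₀ hU, le_rfl, hUT.le, hUT.ne⟩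
  have hzorn : ∀ c ⊆ P, IsChain (· ≤ ·) c → ∀ y ∈ c, ∃ ub ∈ P, ∀ z ∈ c, z ≤ ub := by
    intro c hcP hchain y hyc
    have hmem : ∀ z : V, z ∈ sSup c ↔ ∃ N ∈ c, z ∈ N := fun z =>
      Submodule.mem_sSup_of_directed ⟨y, hyc⟩ hchain.directedOn
    refine ⟨sSup c, ⟨?_, ?_, ?_, ?_⟩, fun z hz => le_sSup hz⟩
    · intro g v hv
      obtain ⟨N, hNc, hvN⟩ := (hmem v).mp hv
      exact le_sSup hNc ((hcP hNc).1 g v hvN)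
    · exact le_trans (hcP hyc).2.1 (le_sSup hyc)
    · exact sSup_le fun N hNc => (hcP hNc).2.2.1
    · intro hTop
      have hqmem : ∀ q : G ⧸ G₀, ∃ N ∈ c, σ q.out x ∈ N := by
        intro q
        apply (hmem _).mp
        rw [hTop]
        exact hT q.out x hxT
      choose Nq hNq1 hNq2 using hqmem
      obtain ⟨Nmax, hNmaxr, hNmaxmax⟩ :=
        Set.Finite.exists_maximalFor id _ (Set.finite_range Nq) ⟨Nq 1, Set.mem_range_self 1⟩
      obtain ⟨q0, hq0⟩ := hNmaxr
      have hle : ∀ q : G ⧸ G₀, Nq q ≤ Nmax := by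
        intro q
        by_cases heq : Nq q = Nmax
        · exact heq.le
        · rcases hchain (hNq1 q) (hq0 ▸ hNq1 q0) heq with h | h
          · exact h
          · exact hNmaxmax (Set.mem_range_self q) h
      have hNmaxc : Nmax ∈ c := hq0 ▸ hNq1 q0
      have hTN : T ≤ Nmax :=
        genTop Nmax (hcP hNmaxc).1 (hcP hNmaxc).2.1 fun q => hle q (hNq2 q)
      exact (hcP hNmaxc).2.2.2 (le_antisymm (hcP hNmaxc).2.2.1 hTN)
  obtain ⟨N, hUN, hNmem, hNmax'⟩ := zorn_le_nonempty₀ P hzorn U hUP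
  obtain ⟨hN0, hNU, hNT, hNneT⟩ := hNmem
  have maxP : ∀ Y, St0 σ G₀ Y → N ≤ Y → Y ≤ T → Y = N ∨ Y = T := by
    intro Y h0 hNY hYT
    by_cases hYT' : Y = T
    · exact Or.inr hYT'
    · exact Or.inl (le_antisymm (hNmax' ⟨h0, le_trans hNU hNY, hYT, hYT'⟩ hNY) hNY)
  have conjMax : ∀ (g : G) (Y : Submodule A V), St0 σ G₀ Y → gSub ρ σ hc g N ≤ Y → Y ≤ T →
      Y = gSub ρ σ hc g N ∨ Y = T := by
    intro g Y h0 hgY hYT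
    have h0' : St0 σ G₀ (gSub ρ σ hc g⁻¹ Y) := st0_gSub ρ σ hc h0 g⁻¹
    have hN1 : N ≤ gSub ρ σ hc g⁻¹ Y := by
      intro v hv
      rw [mem_gSub, inv_inv]
      apply hgY
      rw [mem_gSub, sig_cancel']
      exact hv
    have hT1 : gSub ρ σ hc g⁻¹ Y ≤ T := by
      have h2 := gSub_mono ρ σ hc (g := g⁻¹) hYT
      rwa [stG_gSub_eq ρ σ hc hT g⁻¹] at h2
    have hback : gSub ρ σ hc g (gSub ρ σ hc g⁻¹ Y) = Y := by
      rw [gSub_gSub, mul_inv_cancel, gSub_one]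
    rcases maxP _ h0' hN1 hT1 with h | h
    · left
      rw [← hback, h]
    · right
      rw [← hback, h, stG_gSub_eq ρ σ hc hT g]
  -- the filtration
  set d := Fintype.card (G ⧸ G₀) with hdcard
  have hdind : G₀.index = d := by
    rw [Subgroup.index, Nat.card_eq_fintype_card]
  set e : Fin d ≃ G ⧸ G₀ := (Fintype.equivFin (G ⧸ G₀)).symm with he
  set Kf : (G ⧸ G₀) → Submodule A V := fun q => gSub ρ σ hc q.out N with hKf
  have hKst0 : ∀ q, St0 σ G₀ (Kf q) := fun q => st0_gSub ρ σ hc hN0 _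
  have hKleT : ∀ q, Kf q ≤ T := by
    intro q
    have := gSub_mono ρ σ hc (g := q.out) hNT
    rwa [stG_gSub_eq ρ σ hc hT] at this
  have hUK : ∀ q, U ≤ Kf q := by
    intro q
    have := gSub_mono ρ σ hc (g := q.out) hNU
    rwa [stG_gSub_eq ρ σ hc hU] at this
  set M : ℕ → Submodule A V :=
    fun r => T ⊓ ⨅ (j : Fin d) (_ : r ≤ (j : ℕ)), Kf (e j) with hM
  have hMmono : ∀ r, M r ≤ M (r + 1) := by
    intro r
    refine inf_le_inf_left T ?_
    refine le_iInf fun j => le_iInf fun hj => ?_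
    exact le_trans (iInf_le _ j) (iInf_le _ (le_trans (Nat.le_succ r) hj))
  have hMleT : ∀ r, M r ≤ T := fun r => inf_le_left
  have hMtop : ∀ r, G₀.index ≤ r → M r = T := by
    intro r hr
    rw [hdind] at hr
    have h1 : (⨅ (j : Fin d) (_ : r ≤ (j : ℕ)), Kf (e j)) = ⊤ := by
      rw [iInf_eq_top]
      intro j
      rw [iInf_neg]
      have := j.2
      omega
    rw [hM]
    simp only [h1, inf_top_eq]
  have hMst0 : ∀ r, St0 σ G₀ (M r) := by
    intro r
    exact St0.inf σ (stG_st0 σ G₀ hT) (st0_iInf σ fun j => st0_iInf σ fun _ => hKst0 _)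
  have hM0 : M 0 = U := by
    have hcoreFin : (⨅ (j : Fin d) (_ : (0 : ℕ) ≤ (j : ℕ)), Kf (e j)) = coreG ρ σ hc N := by
      have h2 : ∀ j : Fin d, (⨅ (_ : (0 : ℕ) ≤ (j : ℕ)), Kf (e j)) = Kf (e j) := fun j =>
        iInf_pos (Nat.zero_le _)
      apply le_antisymm
      · refine le_iInf fun g => ?_
        rw [gSub_rep ρ σ hc hN0 g]
        have h3 := iInf_le (fun j : Fin d => ⨅ (_ : (0 : ℕ) ≤ (j : ℕ)), Kf (e j)) (e.symm (g : G ⧸ G₀))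
        rw [h2, Equiv.apply_symm_apply] at h3
        exact h3
      · refine le_iInf fun j => ?_
        rw [h2]
        exact iInf_le _ _
    have hMG : IsStableSubmodule A σ (M 0) := by
      rw [hM]
      simp only []
      rw [hcoreFin]
      exact StG.inf σ hT (stG_coreG ρ σ hc N)
    have hUle : U ≤ M 0 := by
      refine le_inf hUT.le (le_iInf fun j => le_iInf fun _ => hUK _)
    rcases hsimp (M 0) hMG hUle (hMleT 0) with h | h
    · exact h
    · exfalso
      have hq0 : ((1 : G ⧸ G₀)).out ∈ G₀ := by
        rw [← QuotientGroup.eq_one_iff]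
        exact QuotientGroup.out_eq' 1
      have hKN : Kf 1 = N := st0_gSub_eq ρ σ hc hN0 hq0
      have hM0N : M 0 ≤ N := by
        rw [← hKN]
        have h3 : (⨅ (j : Fin d) (_ : (0:ℕ) ≤ (j : ℕ)), Kf (e j)) ≤ Kf (e (e.symm 1)) :=
          le_trans (iInf_le _ (e.symm 1)) (iInf_le _ (Nat.zero_le _))
        rw [Equiv.apply_symm_apply] at h3
        exact le_trans inf_le_right h3
      rw [h] at hM0N
      exact hNneT (le_antisymm hNT hM0N)
  have hMsimp : ∀ r Y, St0 σ G₀ Y → M r ≤ Y → Y ≤ M (r + 1) → Y = M r ∨ Y = M (r + 1) := by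
    intro r Y h0 h1 h2
    by_cases hr : G₀.index ≤ r
    · right
      have ht1 : M r = T := hMtop r hr
      have ht2 : M (r + 1) = T := hMtop (r + 1) (le_trans hr (Nat.le_succ r))
      rw [ht2]
      refine le_antisymm (h2.trans ht2.le) ?_
      rw [← ht1]
      exact h1
    · push_neg at hr
      rw [hdind] at hr
      set j0 : Fin d := ⟨r, hr⟩ with hj0
      have hsplit : M r = M (r + 1) ⊓ Kf (e j0) := by
        apply le_antisymm
        · refine le_inf (hMmono r) (le_trans inf_le_right ?_)
          exact le_trans (iInf_le _ j0) (iInf_le _ le_rfl)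
        · refine le_inf (le_trans inf_le_left inf_le_left)
            (le_iInf fun j => le_iInf fun hj => ?_)
          by_cases hj' : r + 1 ≤ (j : ℕ)
          · refine le_trans inf_le_left (le_trans inf_le_right ?_)
            exact le_trans (iInf_le _ j) (iInf_le _ hj')
          · have : j = j0 := by
              rw [hj0]
              apply Fin.ext
              simp only []
              omega
            rw [this]
            exact inf_le_right
      have hYK : Y ⊔ Kf (e j0) = Kf (e j0) ∨ Y ⊔ Kf (e j0) = T := by
        apply conjMax
        · exact St0.sup σ h0 (hKst0 _)
        · exact le_sup_right
        · exact sup_le (h2.trans (hMleT _)) (hKleT _)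
      have hrec : Y = (Y ⊔ Kf (e j0)) ⊓ M (r + 1) := by
        apply le_antisymm (le_inf le_sup_left h2)
        intro v hv
        obtain ⟨hv1, hv2⟩ := hv
        rcases Submodule.mem_sup.1 hv1 with ⟨y, hy, z, hz, rfl⟩
        have hzM : z ∈ M (r + 1) := by
          have : z = (y + z) - y := by abel
          rw [this]
          exact Submodule.sub_mem _ hv2 (h2 hy)
        have hzMr : z ∈ M r := by
          rw [hsplit]
          exact ⟨hzM, hz⟩
        exact Y.add_mem hy (h1 hzMr)
      rcases hYK with h | h
      · left
        rw [hrec, h, inf_comm, ← hsplit]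
      · right
        rw [hrec, h, inf_eq_right.mpr (hMleT (r + 1))]
  exact ⟨M, hM0, hMtop, hMmono, hMst0, hMsimp⟩

end Interval


end LenAG23


/-- Lemma 2.3: for a normal subgroup `G₀ ≤ G` of finite index and an
`(A,G)`-module `V`, one has
`Len_{A,G}(V) ≤ Len_{A,G₀}(V) ≤ [G:G₀] ⬝ Len_{A,G}(V)`. -/
theorem lenAG_le_lenAG_subgroup_le_index_mul
    {k A G V : Type*} [Field k] [Ring A] [Algebra k A] [Group G]
    [AddCommGroup V] [Module k V] [Module A V] [IsScalarTower k A V]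
    (ρ : G →* (A ≃ₐ[k] A)) (σ : G →* (V ≃ₗ[k] V))
    (hcompat : ∀ (g : G) (a : A) (v : V), σ g (a • v) = (ρ g a) • (σ g v))
    (G₀ : Subgroup G) [G₀.Normal] (hfin : G₀.index ≠ 0) :
    lenAG A σ ≤ lenAG A (σ.comp G₀.subtype) ∧
      lenAG A (σ.comp G₀.subtype) ≤ (G₀.index : ℕ∞) * lenAG A σ := by
  classical
  constructor
  · refine LenAG23.lenAG_le σ fun n hn => ?_
    obtain ⟨f, hst, hmono, hstrict⟩ := hn
    exact LenAG23.le_lenAG (σ.comp G₀.subtype)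
      ⟨f, fun i g v hv => hst i g v hv, hmono, hstrict⟩
  · rcases eq_or_ne (lenAG A σ) ⊤ with hL | hL
    · rw [hL, ENat.mul_top (m := (G₀.index : ℕ∞)) (by exact_mod_cast hfin)]
      exact le_top
    obtain ⟨m, hm0⟩ := WithTop.ne_top_iff_exists.mp hL
    have hm : (m : ℕ∞) = lenAG A σ := by exact_mod_cast hm0
    set d := G₀.index with hd
    have hd0 : 0 < d := Nat.pos_of_ne_zero hfin
    have hub : ∀ n, LenAG23.NChain A σ n → n ≤ m := by
      intro n hn
      have h1 := LenAG23.le_lenAG σ hn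
      rw [← hm] at h1
      exact Nat.cast_le.mp h1
    have hex : LenAG23.NChain A σ m := by
      by_contra hcon
      have hm0 : m ≠ 0 := fun h => hcon (h ▸ LenAG23.nchain_zero σ)
      have hle : lenAG A σ ≤ ((m - 1 : ℕ) : ℕ∞) := by
        refine LenAG23.lenAG_le σ fun n hn => ?_
        have h1 := hub n hn
        have h2 : n ≠ m := fun h => hcon (h ▸ hn)
        exact Nat.cast_le.mpr (by omega)
      rw [← hm] at hle
      have h3 := Nat.cast_le.mp hle
      omega
    obtain ⟨f, hfst, hfmono, hfstrict⟩ := hex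
    have hfm : Monotone f := monotone_nat_of_le_succ hfmono
    -- first element is ⊥
    have hbot : f 0 = ⊥ := by
      by_contra hne
      have hchain : LenAG23.NChain A σ (m + 1) := by
        refine ⟨fun i => match i with | 0 => ⊥ | (j + 1) => f j, ?_, ?_, ?_⟩
        · intro i
          cases i with
          | zero => exact LenAG23.stG_bot σ
          | succ j => exact hfst j
        · intro i
          cases i with
          | zero => exact bot_le
          | succ j => exact hfmono j
        · intro i hi
          cases i with
          | zero => exact bot_lt_iff_ne_bot.mpr (fun h => hne h)
          | succ j => exact hfstrict j (by omega)
      have := hub (m + 1) hchain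
      omega
    -- last element is ⊤
    have htopf : f m = ⊤ := by
      by_contra hne
      have hchain : LenAG23.NChain A σ (m + 1) := by
        refine ⟨fun i => if i ≤ m then f i else ⊤, ?_, ?_, ?_⟩
        · intro i
          dsimp only
          by_cases h : i ≤ m
          · rw [if_pos h]; exact hfst i
          · rw [if_neg h]; exact LenAG23.stG_top σ
        · intro i
          dsimp only
          by_cases h1 : i + 1 ≤ m
          · rw [if_pos (by omega : i ≤ m), if_pos h1]; exact hfmono i
          · by_cases h2 : i ≤ m
            · rw [if_pos h2, if_neg h1]; exact le_top
            · rw [if_neg h2, if_neg h1]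
        · intro i hi
          dsimp only
          by_cases h1 : i + 1 ≤ m
          · rw [if_pos (by omega : i ≤ m), if_pos h1]; exact hfstrict i (by omega)
          · have h2 : i = m := by omega
            subst h2
            rw [if_pos (le_refl i), if_neg h1]
            exact Ne.lt_top hne
      have := hub (m + 1) hchain
      omega
    -- intervals are G-simple
    have hsimple : ∀ s, s < m → ∀ Y, IsStableSubmodule A σ Y → f s ≤ Y → Y ≤ f (s + 1) →
        Y = f s ∨ Y = f (s + 1) := by
      intro s hs Y hY h1 h2
      by_contra hcon
      push_neg at hcon
      obtain ⟨hne1, hne2⟩ := hcon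
      have hchain : LenAG23.NChain A σ (m + 1) := by
        refine ⟨fun i => if i ≤ s then f i else if i = s + 1 then Y else f (i - 1), ?_, ?_, ?_⟩
        · intro i
          dsimp only
          by_cases ha : i ≤ s
          · rw [if_pos ha]; exact hfst i
          · by_cases hb : i = s + 1
            · rw [if_neg ha, if_pos hb]; exact hY
            · rw [if_neg ha, if_neg hb]; exact hfst _
        · intro i
          dsimp only
          by_cases ha : i + 1 ≤ s
          · rw [if_pos (by omega : i ≤ s), if_pos ha]; exact hfmono i
          · by_cases hb : i ≤ s
            · have his : i = s := by omega
              rw [if_pos hb, if_neg ha, if_pos (by omega : i + 1 = s + 1), his]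
              exact h1
            · by_cases hc : i = s + 1
              · rw [if_neg hb, if_pos hc, if_neg (by omega : ¬ i + 1 ≤ s),
                  if_neg (by omega : ¬ i + 1 = s + 1), (by omega : i + 1 - 1 = s + 1)]
                exact h2
              · rw [if_neg hb, if_neg hc, if_neg (by omega : ¬ i + 1 ≤ s),
                  if_neg (by omega : ¬ i + 1 = s + 1), (by omega : i + 1 - 1 = i - 1 + 1)]
                exact hfmono (i - 1)
        · intro i hi
          dsimp only
          by_cases ha : i + 1 ≤ s
          · rw [if_pos (by omega : i ≤ s), if_pos ha]; exact hfstrict i (by omega)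
          · by_cases hb : i ≤ s
            · have his : i = s := by omega
              rw [if_pos hb, if_neg ha, if_pos (by omega : i + 1 = s + 1), his]
              exact lt_of_le_of_ne h1 (Ne.symm hne1)
            · by_cases hc : i = s + 1
              · rw [if_neg hb, if_pos hc, if_neg (by omega : ¬ i + 1 ≤ s),
                  if_neg (by omega : ¬ i + 1 = s + 1), (by omega : i + 1 - 1 = s + 1)]
                exact lt_of_le_of_ne h2 hne2
              · rw [if_neg hb, if_neg hc, if_neg (by omega : ¬ i + 1 ≤ s),
                  if_neg (by omega : ¬ i + 1 = s + 1), (by omega : i + 1 - 1 = i - 1 + 1)]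
                exact hfstrict (i - 1) (by omega)
      have := hub (m + 1) hchain
      omega
    -- Clifford filtration of each simple interval
    have hcliff : ∀ s : ℕ, ∃ M : ℕ → Submodule A V, s < m →
        (M 0 = f s ∧ (∀ r, d ≤ r → M r = f (s + 1)) ∧ (∀ r, M r ≤ M (r + 1)) ∧
          (∀ r, LenAG23.St0 σ G₀ (M r)) ∧
          ∀ r Y, LenAG23.St0 σ G₀ Y → M r ≤ Y → Y ≤ M (r + 1) → Y = M r ∨ Y = M (r + 1)) := by
      intro s
      by_cases hs : s < m
      · obtain ⟨M, h1, h2, h3, h4, h5⟩ := LenAG23.interval_filtration ρ σ hcompat G₀ hfin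
          (f s) (f (s + 1)) (hfst s) (hfst (s + 1)) (hfstrict s hs) (hsimple s hs)
        exact ⟨M, fun _ => ⟨h1, h2, h3, h4, h5⟩⟩
      · exact ⟨fun _ => ⊤, fun h => absurd h hs⟩
    choose Mf hMf using hcliff
    set K := d * m with hK
    set X : ℕ → Submodule A V := fun t => if t < K then Mf (t / d) (t % d) else ⊤ with hX
    have hXdef : ∀ t, X t = if t < K then Mf (t / d) (t % d) else ⊤ := fun t => rfl
    have hXval : ∀ t, t < K → X t = Mf (t / d) (t % d) := fun t ht => by
      rw [hXdef t, if_pos ht]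
    have hXtop : ∀ t, K ≤ t → X t = ⊤ := fun t ht => by
      rw [hXdef t, if_neg (by omega)]
    have hsm : ∀ t, t < K → t / d < m := by
      intro t ht
      rw [Nat.div_lt_iff_lt_mul hd0]
      rw [hK] at ht
      exact lt_of_lt_of_eq ht (Nat.mul_comm d m)
    have hXst0 : ∀ t, LenAG23.St0 σ G₀ (X t) := by
      intro t
      by_cases ht : t < K
      · rw [hXval t ht]
        exact (hMf _ (hsm t ht)).2.2.2.1 _
      · rw [hXtop t (by omega)]
        exact LenAG23.st0_top σ G₀
    have hXsucc : ∀ t, t < K → X (t + 1) = Mf (t / d) (t % d + 1) := by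
      intro t ht
      have hts : d * (t / d) + t % d = t := Nat.div_add_mod t d
      have hrd : t % d < d := Nat.mod_lt _ hd0
      by_cases h1 : t + 1 < K
      · by_cases h2 : t % d + 1 < d
        · have he : t + 1 = d * (t / d) + (t % d + 1) := by omega
          have hdiv : (t + 1) / d = t / d := by
            rw [he, Nat.mul_add_div hd0, Nat.div_eq_of_lt h2, Nat.add_zero]
          have hmod : (t + 1) % d = t % d + 1 := by
            rw [he, Nat.mul_add_mod, Nat.mod_eq_of_lt h2]
          rw [hXval (t + 1) h1, hdiv, hmod]
        · have hr1 : t % d + 1 = d := by omega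
          have he : t + 1 = d * (t / d + 1) := by rw [Nat.mul_add, Nat.mul_one]; omega
          have hdiv : (t + 1) / d = t / d + 1 := by rw [he, Nat.mul_div_cancel_left _ hd0]
          have hmod : (t + 1) % d = 0 := by rw [he]; exact Nat.mul_mod_right d _
          have hs1 : t / d + 1 < m := by
            have h3 := hsm (t + 1) h1
            rwa [hdiv] at h3
          rw [hXval (t + 1) h1, hdiv, hmod, (hMf (t / d + 1) hs1).1,
            (hMf (t / d) (hsm t ht)).2.1 (t % d + 1) (by omega)]
      · have htK : t + 1 = K := by omega
        have hsmt : t / d < m := hsm t ht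
        obtain ⟨u, hu⟩ : ∃ u, u = d * (t / d) := ⟨_, rfl⟩
        have hle : u + d ≤ K := by
          rw [hu, hK]
          calc d * (t / d) + d = d * (t / d + 1) := by ring
            _ ≤ d * m := Nat.mul_le_mul_left d hsmt
        have hts' : u + t % d = t := by rw [hu]; exact hts
        have hr1 : t % d + 1 = d := by omega
        have hud : u + d = K := by omega
        have heq : d * m = d * (t / d + 1) := by
          rw [Nat.mul_add, Nat.mul_one, ← hu]
          omega
        have hm1 : m = t / d + 1 := Nat.eq_of_mul_eq_mul_left hd0 heq
        rw [hXtop (t + 1) (by omega), (hMf (t / d) hsmt).2.1 (t % d + 1) (by omega), ← hm1, htopf]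
    have hX0 : X 0 = ⊥ := by
      by_cases h : 0 < K
      · have hm0 : 0 < m := by
          have h1 := hsm 0 h
          rwa [Nat.zero_div] at h1
        rw [hXval 0 h, Nat.zero_div, Nat.zero_mod, (hMf 0 hm0).1, hbot]
      · have hK0 : K = 0 := by omega
        have hm0 : m = 0 := by
          rcases Nat.mul_eq_zero.mp (hK ▸ hK0 : d * m = 0) with h1 | h1
          · omega
          · exact h1
        have htb : (⊤ : Submodule A V) = ⊥ := by rw [← htopf, hm0, hbot]
        rw [hXtop 0 (by omega), htb]
    have hXmono : ∀ t, X t ≤ X (t + 1) := by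
      intro t
      by_cases ht : t < K
      · rw [hXval t ht, hXsucc t ht]
        exact (hMf _ (hsm t ht)).2.2.1 _
      · rw [hXtop t (by omega), hXtop (t + 1) (by omega)]
    have hXsimp : ∀ t Y, LenAG23.St0 σ G₀ Y → X t ≤ Y → Y ≤ X (t + 1) →
        Y = X t ∨ Y = X (t + 1) := by
      intro t Y h0 h1 h2
      by_cases ht : t < K
      · rw [hXval t ht] at h1 ⊢
        rw [hXsucc t ht] at h2 ⊢
        exact (hMf _ (hsm t ht)).2.2.2.2 _ Y h0 h1 h2
      · left
        rw [hXtop t (by omega)] at h1 ⊢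
        exact le_antisymm le_top h1
    -- key modular counting lemma
    have lemA : ∀ Y Y' : Submodule A V, Y ≤ Y' →
        (∀ t, t < K → (Y ⊔ X t) ⊓ X (t + 1) = (Y' ⊔ X t) ⊓ X (t + 1)) → Y' ≤ Y := by
      intro Y Y' hYY' hF
      have key : ∀ t, t ≤ K → Y' ⊓ X t ≤ Y := by
        intro t
        induction t with
        | zero => intro _; rw [hX0, inf_bot_eq]; exact bot_le
        | succ t ih =>
          intro htK
          have ht : t < K := by omega
          intro v hv
          obtain ⟨hv1, hv2⟩ := Submodule.mem_inf.mp hv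
          have hvF : v ∈ (Y ⊔ X t) ⊓ X (t + 1) := by
            rw [hF t ht]
            exact Submodule.mem_inf.mpr ⟨Submodule.mem_sup_left hv1, hv2⟩
          obtain ⟨hvs, _⟩ := Submodule.mem_inf.mp hvF
          rcases Submodule.mem_sup.1 hvs with ⟨y, hy, z, hz, rfl⟩
          have hzY' : z ∈ Y' := by
            have h5 : z = (y + z) - y := by abel
            rw [h5]
            exact Y'.sub_mem hv1 (hYY' hy)
          exact Y.add_mem hy (ih (by omega) (Submodule.mem_inf.mpr ⟨hzY', hz⟩))
      have h2 := key K le_rfl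
      rwa [hXtop K le_rfl, inf_top_eq] at h2
    -- final counting
    have hbound : lenAG A (σ.comp G₀.subtype) ≤ ((K : ℕ) : ℕ∞) := by
      refine LenAG23.lenAG_le _ fun n hn => ?_
      obtain ⟨f2, h2st0, h2mono, h2strict⟩ := hn
      have h2st : ∀ i, LenAG23.St0 σ G₀ (f2 i) := fun i => h2st0 i
      have hf2m : Monotone f2 := monotone_nat_of_le_succ h2mono
      rw [Nat.cast_le]
      have hpick : ∀ i, i < n →
          ∃ t, t < K ∧ (f2 i ⊔ X t) ⊓ X (t + 1) ≠ (f2 (i + 1) ⊔ X t) ⊓ X (t + 1) := by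
        intro i hi
        by_contra hcon
        push_neg at hcon
        exact absurd (lemA (f2 i) (f2 (i + 1)) (h2mono i) hcon) (h2strict i hi).not_ge
      choose tf htfK htfne using hpick
      have haux : ∀ (i i' : ℕ) (hi : i < n) (hi' : i' < n), i < i' → tf i hi ≠ tf i' hi' := by
        intro i i' hi hi' hlt heq
        set t := tf i hi with htdef
        have hP : ∀ j, LenAG23.St0 σ G₀ ((f2 j ⊔ X t) ⊓ X (t + 1)) := fun j =>
          LenAG23.St0.inf σ (LenAG23.St0.sup σ (h2st j) (hXst0 t)) (hXst0 (t + 1))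
        have hPb : ∀ j, X t ≤ (f2 j ⊔ X t) ⊓ X (t + 1) := fun j =>
          le_inf le_sup_right (hXmono t)
        have hPt : ∀ j, (f2 j ⊔ X t) ⊓ X (t + 1) ≤ X (t + 1) := fun j => inf_le_right
        have hPd : ∀ j, (f2 j ⊔ X t) ⊓ X (t + 1) = X t ∨
            (f2 j ⊔ X t) ⊓ X (t + 1) = X (t + 1) := fun j =>
          hXsimp t _ (hP j) (hPb j) (hPt j)
        have hPm : ∀ j j', j ≤ j' →
            (f2 j ⊔ X t) ⊓ X (t + 1) ≤ (f2 j' ⊔ X t) ⊓ X (t + 1) := fun j j' h =>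
          inf_le_inf_right _ (sup_le_sup_right (hf2m h) _)
        have hlt1 : (f2 i ⊔ X t) ⊓ X (t + 1) < (f2 (i + 1) ⊔ X t) ⊓ X (t + 1) :=
          lt_of_le_of_ne (hPm i (i + 1) (by omega)) (htfne i hi)
        have hlt2 : (f2 i' ⊔ X t) ⊓ X (t + 1) < (f2 (i' + 1) ⊔ X t) ⊓ X (t + 1) := by
          have h6 := htfne i' hi'
          rw [← heq] at h6
          exact lt_of_le_of_ne (hPm i' (i' + 1) (by omega)) h6
        rcases hPd i with ha | ha
        · rcases hPd i' with hb | hb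
          · have hc : (f2 (i + 1) ⊔ X t) ⊓ X (t + 1) ≤ (f2 i' ⊔ X t) ⊓ X (t + 1) :=
              hPm _ _ (by omega)
            rw [ha] at hlt1
            rw [hb] at hc
            exact absurd (lt_of_lt_of_le hlt1 hc) (lt_irrefl _)
          · rw [hb] at hlt2
            exact absurd (lt_of_lt_of_le hlt2 (hPt _)) (lt_irrefl _)
        · rw [ha] at hlt1
          exact absurd (lt_of_lt_of_le hlt1 (hPt _)) (lt_irrefl _)
      have hinj : Function.Injective
          (fun i : Fin n => (⟨tf i.1 i.2, htfK i.1 i.2⟩ : Fin K)) := by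
        intro i i' hii
        have h7 : tf i.1 i.2 = tf i'.1 i'.2 := by
          simpa [Fin.mk.injEq] using hii
        by_contra hne
        have hne' : i.1 ≠ i'.1 := fun h => hne (Fin.ext h)
        rcases Nat.lt_or_ge i.1 i'.1 with h | h
        · exact haux i.1 i'.1 i.2 i'.2 h h7
        · exact haux i'.1 i.1 i'.2 i.2 (by omega) h7.symm
      simpa using Fintype.card_le_of_injective _ hinj
    refine hbound.trans (le_of_eq ?_)
    rw [hK]
    push_cast
    rw [hm]
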